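/- Define v_1 = 1, v_{k+1} = k·2^{v_k} + v_k + 1, α = Σ_{k=1}^∞ 2^{-v_k}, and n_k = 2^{v_k} for k ≥ 1. Then for every k ≥ 1, the fractional part of n_k·α satisfies n_k α - ⌊n_k α⌋ < 2^{-k·n_k}. -/

import Mathlib

/-- With `v 1 = 1`, `v (k+1) = k·2^(v k) + v k + 1`, `α = Σ_{k≥1} 2^{-v k}`,
`n k = 2^(v k)`: for every `k ≥ 1` the fractional part of `n k · α` is `< 2^{-k·n k}`. -/
theorem stmt2 (v : ℕ → ℕ) (hv1 : v 1 = 1)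
    (hv : ∀ k ≥ 1, v (k + 1) = k * 2 ^ (v k) + v k + 1)
    (α : ℝ) (hα : α = ∑' k : ℕ, (2:ℝ) ^ (-(v (k + 1) : ℤ)))
    (n : ℕ → ℕ) (hn : ∀ k, n k = 2 ^ (v k)) :
    ∀ k ≥ 1, Int.fract ((n k : ℝ) * α) < (2:ℝ) ^ (-((k * n k : ℕ) : ℤ)) := by
  have h2 : (2:ℝ) ≠ 0 := two_ne_zero
  -- v ℓ ≥ ℓ for ℓ ≥ 1
  have hge : ∀ ℓ, 1 ≤ ℓ → ℓ ≤ v ℓ := by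
    intro ℓ hℓ
    induction ℓ with
    | zero => omega
    | succ m ih =>
      rcases Nat.lt_or_ge 1 (m + 1) with h | h
      · have hm : 1 ≤ m := by omega
        have h1 := hv m hm
        have h2 := ih hm
        omega
      · have : m + 1 = 1 := by omega
        rw [this, hv1]
  -- monotonicity
  have hmono : ∀ a b, 1 ≤ a → a ≤ b → v a ≤ v b := by
    intro a b ha hab
    induction b with
    | zero => omega
    | succ m ih =>
      rcases Nat.lt_or_ge m a with h | h
      · have : a = m + 1 := by omega
        rw [this]
      · have hm : 1 ≤ m := by omega
        have h1 := hv m hm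
        have h2 := ih h
        omega
  -- gap: v (k+1+j) ≥ v (k+1) + 2*j for k ≥ 1
  have hgap : ∀ k, 1 ≤ k → ∀ j, v (k + 1) + 2 * j ≤ v (k + 1 + j) := by
    intro k hk j
    induction j with
    | zero => simp
    | succ m ih =>
      have h1 : 1 ≤ k + 1 + m := by omega
      have h2 := hv (k + 1 + m) h1
      have h3 : 1 ≤ v (k + 1 + m) := by
        have := hmono 1 (k + 1 + m) le_rfl (by omega)
        omega
      have h4 : 2 ≤ 2 ^ (v (k + 1 + m)) := by
        calc (2:ℕ) = 2 ^ 1 := rfl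
        _ ≤ 2 ^ (v (k + 1 + m)) := Nat.pow_le_pow_right (by norm_num) h3
      have h5 : 2 ≤ (k + 1 + m) * 2 ^ (v (k + 1 + m)) :=
        le_trans h4 (Nat.le_mul_of_pos_left _ (by omega))
      have : k + 1 + (m + 1) = (k + 1 + m) + 1 := by omega
      rw [this]
      omega
  intro k hk
  set f : ℕ → ℝ := fun j => (2:ℝ) ^ ((v k : ℤ) - v (j + 1)) with hf
  -- summability of f
  have hfnn : ∀ j, 0 ≤ f j := fun j => by positivity
  have hgs : Summable (fun j : ℕ => (2:ℝ) ^ (v k : ℤ) * (1/2 : ℝ) ^ j) :=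
    (summable_geometric_of_lt_one (by norm_num) (by norm_num)).mul_left _
  have hfb : ∀ j, f j ≤ (2:ℝ) ^ (v k : ℤ) * (1/2 : ℝ) ^ j := by
    intro j
    have hj : (j : ℤ) + 1 ≤ (v (j + 1) : ℤ) := by
      have := hge (j + 1) (by omega); exact_mod_cast this
    have hle : ((v k : ℤ) - v (j + 1)) ≤ (v k : ℤ) + (-(j:ℤ)) := by omega
    calc f j ≤ (2:ℝ) ^ ((v k : ℤ) + (-(j:ℤ))) :=
          zpow_le_zpow_right₀ one_le_two hle
      _ = (2:ℝ) ^ (v k : ℤ) * (1/2 : ℝ) ^ j := by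
          rw [zpow_add₀ h2]
          congr 1
          rw [one_div, inv_pow, ← zpow_natCast (2:ℝ) j, ← zpow_neg]
  have hsum : Summable f := Summable.of_nonneg_of_le hfnn hfb hgs
  -- n k * α = ∑' f
  have hnα : (n k : ℝ) * α = ∑' j, f j := by
    rw [hα, ← tsum_mul_left]
    refine tsum_congr fun j => ?_
    have : (n k : ℝ) = (2:ℝ) ^ (v k : ℤ) := by
      rw [hn, zpow_natCast]; push_cast; ring
    rw [this, ← zpow_add₀ h2]
    simp only [hf, ← sub_eq_add_neg]
  -- split the sum
  have hsplit := Summable.sum_add_tsum_nat_add (f := f) k hsum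
  set T : ℝ := ∑' i, f (i + k) with hT
  -- the head is a natural number
  set N : ℕ := ∑ i ∈ Finset.range k, 2 ^ (v k - v (i + 1)) with hN
  have hhead : ∑ i ∈ Finset.range k, f i = (N : ℝ) := by
    rw [hN]
    push_cast
    refine Finset.sum_congr rfl fun i hi => ?_
    have hik : i < k := Finset.mem_range.mp hi
    have hle : v (i + 1) ≤ v k := hmono (i + 1) k (by omega) (by omega)
    have heq : (v k : ℤ) - v (i + 1) = ((v k - v (i + 1) : ℕ) : ℤ) := by omega
    show (2:ℝ) ^ ((v k : ℤ) - v (i + 1)) = _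
    rw [heq, zpow_natCast]
  -- bound the tail T
  have hTnn : 0 ≤ T := tsum_nonneg fun i => hfnn _
  have hkey : (v k : ℤ) - v (k + 1) = -((k * n k : ℕ) : ℤ) - 1 := by
    have := hv k hk
    rw [hn]
    push_cast [this]
    ring
  have hgsum : Summable (fun i : ℕ => (2:ℝ) ^ ((v k : ℤ) - v (k + 1)) * (1/4 : ℝ) ^ i) :=
    (summable_geometric_of_lt_one (by norm_num) (by norm_num)).mul_left _
  have hTle : T ≤ (2:ℝ) ^ ((v k : ℤ) - v (k + 1)) * (4/3 : ℝ) := by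
    have hbound : ∀ i : ℕ, f (i + k) ≤ (2:ℝ) ^ ((v k : ℤ) - v (k + 1)) * (1/4 : ℝ) ^ i := by
      intro i
      have hg := hgap k hk i
      have : (v k : ℤ) - v (i + k + 1) ≤ ((v k : ℤ) - v (k + 1)) + (-2 * i) := by
        have : (v (k + 1) : ℤ) + 2 * i ≤ (v (k + 1 + i) : ℤ) := by exact_mod_cast hg
        have heq : i + k + 1 = k + 1 + i := by omega
        rw [heq]
        omega
      calc f (i + k) ≤ (2:ℝ) ^ (((v k : ℤ) - v (k + 1)) + (-2 * i)) :=
            zpow_le_zpow_right₀ one_le_two this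
        _ = (2:ℝ) ^ ((v k : ℤ) - v (k + 1)) * (1/4 : ℝ) ^ i := by
            rw [zpow_add₀ h2]
            congr 1
            rw [show ((-2 : ℤ) * i) = (-2 : ℤ) * (i : ℤ) by norm_num,
              zpow_mul, zpow_natCast]
            norm_num
    calc T ≤ ∑' i : ℕ, (2:ℝ) ^ ((v k : ℤ) - v (k + 1)) * (1/4 : ℝ) ^ i :=
          Summable.tsum_le_tsum hbound (hsum.comp_injective (add_left_injective k)) hgsum
      _ = (2:ℝ) ^ ((v k : ℤ) - v (k + 1)) * (4/3 : ℝ) := by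
          rw [tsum_mul_left, tsum_geometric_of_lt_one (by norm_num) (by norm_num)]
          norm_num
  have hTlt : T < (2:ℝ) ^ (-((k * n k : ℕ) : ℤ)) := by
    calc T ≤ (2:ℝ) ^ ((v k : ℤ) - v (k + 1)) * (4/3 : ℝ) := hTle
      _ = (2:ℝ) ^ (-((k * n k : ℕ) : ℤ)) * (2/3 : ℝ) := by
          rw [hkey, sub_eq_add_neg, zpow_add₀ h2]
          norm_num
          ring
      _ < (2:ℝ) ^ (-((k * n k : ℕ) : ℤ)) := by
          nlinarith [zpow_pos (show (0:ℝ) < 2 by norm_num) (-((k * n k : ℕ) : ℤ))]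
  have hT1 : T < 1 := by
    refine hTlt.trans_le ?_
    exact zpow_le_one_of_nonpos₀ one_le_two (by omega)
  -- conclude
  rw [hnα, ← hsplit, hhead]
  rw [add_comm, Int.fract_add_natCast, Int.fract_eq_self.mpr ⟨hTnn, hT1⟩]
  exact hTlt
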